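/- The group G(Ẽ₇^{(1,1)}) defined by the elliptic Dynkin presentation of type Ẽ₇^{(1,1)} is isomorphic to the group G'(Ẽ₇^{(1,1)}) defined by the new presentation with infinitely many generators tᵢ (i ∈ ℤ). -/

import Mathlib

namespace EllipticE7Aux

variable {M : Type*} [Group M]

/-- braid relation in right-associated rewrite form -/
private lemma braid_aux {a s : M} (h : a * s * a = s * a * s) :
    ∀ x : M, a * (s * (a * x)) = s * (a * (s * x)) := by
  intro x
  calc a * (s * (a * x)) = (a * s * a) * x := by simp only [mul_assoc]
    _ = (s * a * s) * x := by rw [h]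
    _ = s * (a * (s * x)) := by simp only [mul_assoc]

private lemma prod_aux {a b t : M} (h : t * a = a * b) :
    ∀ x : M, a * (b * x) = t * (a * x) := by
  intro x
  calc a * (b * x) = (a * b) * x := by simp only [mul_assoc]
    _ = (t * a) * x := by rw [h]
    _ = t * (a * x) := by simp only [mul_assoc]

private lemma prod_aux' {a b t : M} (h : b * t = a * b) :
    ∀ x : M, a * (b * x) = b * (t * x) := by
  intro x
  calc a * (b * x) = (a * b) * x := by simp only [mul_assoc]
    _ = (b * t) * x := by rw [h]
    _ = b * (t * x) := by simp only [mul_assoc]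

lemma step_up {s a b t : M} (ha : a * s * a = s * a * s) (hb : b * s * b = s * b * s)
    (he : s * (a * b) * s * (a * b) = (a * b) * s * (a * b) * s)
    (ht : t * a = a * b) :
    t * s * t = s * t * s := by
  have ha' := braid_aux ha
  have ht' := prod_aux ht
  have hb0 : s * (b * s) = b * (s * b) := by
    have hb1 : b * (s * b) = s * (b * s) := by simpa only [mul_assoc] using hb
    exact hb1.symm
  have h0 := he
  simp only [mul_assoc] at h0
  -- h0 : s * (a * (b * (s * (a * b)))) = a * (b * (s * (a * (b * s))))
  rw [ht' (s * (a * b)), ha' b, ht' (s * (a * (b * s))), ha' (b * s), hb0, ht' (s * b)] at h0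
  -- h0 : s * (t * (s * (a * (s * b)))) = t * (s * (t * (a * (s * b))))
  simp only [← mul_assoc] at h0
  -- h0 : s * t * s * a * s * b = t * s * t * a * s * b
  exact (mul_right_cancel (mul_right_cancel (mul_right_cancel h0))).symm

lemma step_down {s a b t : M} (ha : a * s * a = s * a * s) (hb : b * s * b = s * b * s)
    (he : s * (a * b) * s * (a * b) = (a * b) * s * (a * b) * s)
    (ht : b * t = a * b) :
    t * s * t = s * t * s := by
  have hb' := braid_aux hb
  have ha2 : ∀ x : M, s * (a * (s * x)) = a * (s * (a * x)) := fun x => (braid_aux ha x).symm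
  have hab := prod_aux' ht
  have h0 := he
  simp only [mul_assoc] at h0
  -- h0 : s * (a * (b * (s * (a * b)))) = a * (b * (s * (a * (b * s))))
  rw [show a * b = b * t from ht.symm] at h0
  -- LHS : s * (a * (b * (s * (b * t))))
  rw [hb' t, ha2 (b * (s * t)), hab (s * t), hab s, hb' (t * s)] at h0
  -- h0 : a * (s * (b * (t * (s * t)))) = a * (s * (b * (s * (t * s))))
  have h1 := mul_left_cancel (mul_left_cancel (mul_left_cancel h0))
  simpa only [← mul_assoc] using h1

lemma elliptic_of {s a b t : M} (ha : a * s * a = s * a * s) (hb : b * s * b = s * b * s)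
    (htb : t * s * t = s * t * s) (ht : t * a = a * b) :
    s * (a * b) * s * (a * b) = (a * b) * s * (a * b) * s := by
  have ha' := braid_aux ha
  have ht' := prod_aux ht
  have hb0 : s * (b * s) = b * (s * b) := by
    have hb1 : b * (s * b) = s * (b * s) := by simpa only [mul_assoc] using hb
    exact hb1.symm
  simp only [mul_assoc]
  rw [ht' (s * (a * b)), ha' b, ht' (s * (a * (b * s))), ha' (b * s), hb0, ht' (s * b)]
  -- ⊢ s * (t * (s * (a * (s * b)))) = t * (s * (t * (a * (s * b))))
  simp only [← mul_assoc]
  rw [htb]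

/-- The sequence `tᵢ` expressed in terms of `x = t₀`, `y = t₁`. -/
def Tm (x y : M) (i : ℤ) : M :=
  (y * x) ^ (i / 2) * (if i % 2 = 0 then x else y) * ((y * x) ^ (i / 2))⁻¹

lemma Tm_even (x y : M) (k : ℤ) : Tm x y (2 * k) = (y * x) ^ k * x * ((y * x) ^ k)⁻¹ := by
  have h1 : (2 * k) / 2 = k := by omega
  have h2 : (2 * k) % 2 = 0 := by omega
  rw [Tm, h1, h2, if_pos rfl]

lemma Tm_odd (x y : M) (k : ℤ) : Tm x y (2 * k + 1) = (y * x) ^ k * y * ((y * x) ^ k)⁻¹ := by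
  have h1 : (2 * k + 1) / 2 = k := by omega
  have h2 : (2 * k + 1) % 2 = 1 := by omega
  rw [Tm, h1, h2, if_neg one_ne_zero]

lemma Tm_zero (x y : M) : Tm x y 0 = x := by
  have := Tm_even x y 0
  simpa using this

lemma Tm_one (x y : M) : Tm x y 1 = y := by
  have := Tm_odd x y 0
  simpa using this

lemma Tm_mul (x y : M) (i : ℤ) : Tm x y (i + 1) * Tm x y i = y * x := by
  obtain ⟨k, hk | hk⟩ := Int.even_or_odd' i
  · subst hk
    rw [show 2 * k + 1 = 2 * k + 1 from rfl, Tm_odd, Tm_even]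
    simp only [mul_assoc, inv_mul_cancel_left]
    -- ⊢ (y*x)^k * (y * (x * ((y*x)^k)⁻¹)) = y * x
    rw [← mul_assoc y x, ← mul_assoc, ← ((Commute.refl (y * x)).zpow_right k).eq,
      mul_inv_cancel_right]
  · subst hk
    rw [show 2 * k + 1 + 1 = 2 * (k + 1) by ring, Tm_even, Tm_odd, zpow_add_one]
    simp only [mul_inv_rev, mul_assoc, inv_mul_cancel_left, mul_inv_cancel_left]
    rw [← mul_assoc y x, ← mul_assoc, ← ((Commute.refl (y * x)).zpow_right k).eq,
      mul_inv_cancel_right]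


lemma Tm_succ (x y : M) (i : ℤ) : Tm x y (i + 1) = (y * x) * (Tm x y i)⁻¹ :=
  eq_mul_inv_of_mul_eq (Tm_mul x y i)

lemma Tm_mul' (x y : M) (i : ℤ) : Tm x y i * Tm x y (i - 1) = y * x := by
  have := Tm_mul x y (i - 1)
  rwa [sub_add_cancel] at this

lemma Tm_pred (x y : M) (i : ℤ) : Tm x y (i - 1) = (Tm x y i)⁻¹ * (y * x) :=
  eq_inv_mul_of_mul_eq (Tm_mul' x y i)

lemma Tm_commute {x y u : M} (hx : Commute x u) (hy : Commute y u) (i : ℤ) :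
    Commute (Tm x y i) u := by
  have hc : Commute ((y * x) ^ (i / 2)) u := (hy.mul_left hx).zpow_left _
  have hite : Commute (if i % 2 = 0 then x else y) u := by split <;> assumption
  exact (hc.mul_left hite).mul_left hc.inv_left


lemma Tm_braid {x y s : M} (hx : x * s * x = s * x * s) (hy : y * s * y = s * y * s)
    (he : s * (y * x) * s * (y * x) = (y * x) * s * (y * x) * s) (i : ℤ) :
    Tm x y i * s * Tm x y i = s * Tm x y i * s := by
  suffices h : ∀ j : ℤ, (Tm x y j * s * Tm x y j = s * Tm x y j * s) ∧
      (Tm x y (j + 1) * s * Tm x y (j + 1) = s * Tm x y (j + 1) * s) from (h i).1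
  intro j
  induction j using Int.induction_on with
  | zero =>
    rw [show (0 : ℤ) + 1 = 1 from rfl, Tm_zero, Tm_one]
    exact ⟨hx, hy⟩
  | succ k ih =>
    refine ⟨ih.2, ?_⟩
    have hab : Tm x y ((k : ℤ) + 1) * Tm x y (k : ℤ) = y * x := Tm_mul x y _
    have ht : Tm x y ((k : ℤ) + 1 + 1) * Tm x y ((k : ℤ) + 1) =
        Tm x y ((k : ℤ) + 1) * Tm x y (k : ℤ) := by rw [Tm_mul, hab]
    have he' : s * (Tm x y ((k : ℤ) + 1) * Tm x y (k : ℤ)) * s *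
          (Tm x y ((k : ℤ) + 1) * Tm x y (k : ℤ)) =
        (Tm x y ((k : ℤ) + 1) * Tm x y (k : ℤ)) * s *
          (Tm x y ((k : ℤ) + 1) * Tm x y (k : ℤ)) * s := by rw [hab]; exact he
    exact step_up ih.2 ih.1 he' ht
  | pred k ih =>
    refine ⟨?_, by rw [show (-(k : ℤ) - 1) + 1 = -(k : ℤ) by ring]; exact ih.1⟩
    have hab : Tm x y (-(k : ℤ) + 1) * Tm x y (-(k : ℤ)) = y * x := Tm_mul x y _
    have ht : Tm x y (-(k : ℤ)) * Tm x y (-(k : ℤ) - 1) =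
        Tm x y (-(k : ℤ) + 1) * Tm x y (-(k : ℤ)) := by rw [Tm_mul' x y, hab]
    have he' : s * (Tm x y (-(k : ℤ) + 1) * Tm x y (-(k : ℤ))) * s *
          (Tm x y (-(k : ℤ) + 1) * Tm x y (-(k : ℤ))) =
        (Tm x y (-(k : ℤ) + 1) * Tm x y (-(k : ℤ))) * s *
          (Tm x y (-(k : ℤ) + 1) * Tm x y (-(k : ℤ))) * s := by rw [hab]; exact he
    exact step_down ih.2 ih.1 he' ht

lemma map_Tm {N : Type*} [Group N] (f : M →* N) (x y : M) (i : ℤ) :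
    f (Tm x y i) = Tm (f x) (f y) i := by
  simp only [Tm, map_mul, map_inv, map_zpow, apply_ite f]


section Pres
variable {β : Type} {rels : Set (FreeGroup β)}

lemma mk_rel {r : FreeGroup β} (h : r ∈ rels) : PresentedGroup.mk rels r = 1 := by
  have hr : r ∈ Subgroup.normalClosure rels := Subgroup.subset_normalClosure h
  exact (QuotientGroup.eq_one_iff r).mpr hr

lemma rel_eq {u v : FreeGroup β} (h : u⁻¹ * v ∈ rels) :
    PresentedGroup.mk rels u = PresentedGroup.mk rels v := by
  have h1 : PresentedGroup.mk rels (u⁻¹ * v) = 1 := mk_rel h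
  rw [map_mul, map_inv, inv_mul_eq_one] at h1
  exact h1

lemma one_of_eq {G : Type*} [Group G] {a b : G} (h : a = b) : a⁻¹ * b = 1 := by
  rw [h, inv_mul_cancel]

end Pres

end EllipticE7Aux


/-!
STATEMENT 7: The group G(Ẽ₇^{(1,1)}) defined by the elliptic Dynkin presentation is isomorphic
to the group G'(Ẽ₇^{(1,1)}) defined by the new presentation with infinitely many
generators tᵢ (i ∈ ℤ).
-/

namespace EllipticE7

/-- Generators of `G(Ẽ₇^{(1,1)})`: `Sum.inl i` is `tᵢ` (`i ∈ {0,1}`),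
`Sum.inr j` is `s_(j+1)` (so `Sum.inr 0` is `s₁`, ..., `Sum.inr 6` is `s₇`). -/
abbrev GenG : Type := Fin 2 ⊕ Fin 7

/-- Generators of `G'(Ẽ₇^{(1,1)})`: `Sum.inl i` is `tᵢ` (`i ∈ ℤ`),
`Sum.inr j` is `s_(j+1)`. -/
abbrev GenG' : Type := ℤ ⊕ Fin 7

/-- The braid relator `(aba)⁻¹(bab)` encoding the relation `aba = bab`. -/
def br {α : Type} (a b : FreeGroup α) : FreeGroup α := (a * b * a)⁻¹ * (b * a * b)

/-- The commutation relator `(ab)⁻¹(ba)` encoding the relation `ab = ba`. -/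
def cm {α : Type} (a b : FreeGroup α) : FreeGroup α := (a * b)⁻¹ * (b * a)

/-- The pairs of (0-indexed) `s`-generators joined by an edge in the diagram,
i.e. satisfying a braid relation: (s₂,s₄), (s₄,s₅), (s₃,s₆), (s₆,s₇). -/
def braidPairs : List (Fin 7 × Fin 7) := [(1, 3), (3, 4), (2, 5), (5, 6)]

def tG (i : Fin 2) : FreeGroup GenG := FreeGroup.of (Sum.inl i)
def sG (j : Fin 7) : FreeGroup GenG := FreeGroup.of (Sum.inr j)

/-- Relators of the elliptic Dynkin presentation of `G(Ẽ₇^{(1,1)})`: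
braid relations between `t₀, t₁` and `s₁, s₂, s₃`, braid relations along the edges
of the `s`-part of the diagram, the elliptic relations for `s₁, s₂, s₃`, and
commutation relations for all remaining pairs of distinct generators except `{t₀,t₁}`. -/
def relsG : Set (FreeGroup GenG) :=
  { r | (∃ i : Fin 2, ∃ j : Fin 7, j.val < 3 ∧ r = br (tG i) (sG j)) ∨
        (∃ p ∈ braidPairs, r = br (sG p.1) (sG p.2)) ∨
        (∃ j : Fin 7, j.val < 3 ∧
          r = (sG j * tG 1 * tG 0 * sG j * tG 1 * tG 0)⁻¹ *
              (tG 1 * tG 0 * sG j * tG 1 * tG 0 * sG j)) ∨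
        (∃ i j : Fin 7, i ≠ j ∧ (i, j) ∉ braidPairs ∧ (j, i) ∉ braidPairs ∧
          r = cm (sG i) (sG j)) ∨
        (∃ i : Fin 2, ∃ j : Fin 7, 3 ≤ j.val ∧ r = cm (tG i) (sG j)) }

def tG' (i : ℤ) : FreeGroup GenG' := FreeGroup.of (Sum.inl i)
def sG' (j : Fin 7) : FreeGroup GenG' := FreeGroup.of (Sum.inr j)

/-- Relators of the new presentation of `G'(Ẽ₇^{(1,1)})`: braid relations between
every `tᵢ` (`i ∈ ℤ`) and `s₁, s₂, s₃`, the relations `tᵢtᵢ₋₁ = tⱼtⱼ₋₁`, braid relations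
along the edges of the `s`-part of the diagram, commutation relations between the
remaining pairs of distinct `s`-generators, and commutation of every `tᵢ` with
`s₄, …, s₇`. -/
def relsG' : Set (FreeGroup GenG') :=
  { r | (∃ i : ℤ, ∃ j : Fin 7, j.val < 3 ∧ r = br (tG' i) (sG' j)) ∨
        (∃ i j : ℤ, r = (tG' i * tG' (i - 1))⁻¹ * (tG' j * tG' (j - 1))) ∨
        (∃ p ∈ braidPairs, r = br (sG' p.1) (sG' p.2)) ∨
        (∃ i j : Fin 7, i ≠ j ∧ (i, j) ∉ braidPairs ∧ (j, i) ∉ braidPairs ∧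
          r = cm (sG' i) (sG' j)) ∨
        (∃ i : ℤ, ∃ j : Fin 7, 3 ≤ j.val ∧ r = cm (tG' i) (sG' j)) }


section Construction
open EllipticE7Aux

/-- `t₀` in `G`. -/
def XX : PresentedGroup relsG := PresentedGroup.of (Sum.inl 0)
/-- `t₁` in `G`. -/
def YY : PresentedGroup relsG := PresentedGroup.of (Sum.inl 1)
/-- `s_(j+1)` in `G`. -/
def SS (j : Fin 7) : PresentedGroup relsG := PresentedGroup.of (Sum.inr j)
/-- `tᵢ` in `G'`. -/
def TT' (i : ℤ) : PresentedGroup relsG' := PresentedGroup.of (Sum.inl i)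
/-- `s_(j+1)` in `G'`. -/
def SS' (j : Fin 7) : PresentedGroup relsG' := PresentedGroup.of (Sum.inr j)

/-! ### Relations holding in `G` -/

lemma braidG (i : Fin 2) {j : Fin 7} (hj : j.val < 3) :
    PresentedGroup.of (Sum.inl i) * SS j * PresentedGroup.of (Sum.inl i) =
      SS j * PresentedGroup.of (Sum.inl i) * SS j := by
  have h := rel_eq (rels := relsG) (u := tG i * sG j * tG i) (v := sG j * tG i * sG j)
    (Or.inl ⟨i, j, hj, rfl⟩)
  simp only [map_mul] at h
  exact h

lemma sbraidG {p : Fin 7 × Fin 7} (hp : p ∈ braidPairs) :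
    SS p.1 * SS p.2 * SS p.1 = SS p.2 * SS p.1 * SS p.2 := by
  have h := rel_eq (rels := relsG) (u := sG p.1 * sG p.2 * sG p.1)
    (v := sG p.2 * sG p.1 * sG p.2) (Or.inr (Or.inl ⟨p, hp, rfl⟩))
  simp only [map_mul] at h
  exact h

lemma ellG {j : Fin 7} (hj : j.val < 3) :
    SS j * (YY * XX) * SS j * (YY * XX) = (YY * XX) * SS j * ((YY * XX) * SS j) := by
  have h := rel_eq (rels := relsG)
    (u := sG j * tG 1 * tG 0 * sG j * tG 1 * tG 0)
    (v := tG 1 * tG 0 * sG j * tG 1 * tG 0 * sG j)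
    (Or.inr (Or.inr (Or.inl ⟨j, hj, rfl⟩)))
  simp only [map_mul] at h
  simp only [mul_assoc] at h ⊢
  exact h

lemma scommG {i j : Fin 7} (hij : i ≠ j) (h1 : (i, j) ∉ braidPairs)
    (h2 : (j, i) ∉ braidPairs) : SS i * SS j = SS j * SS i := by
  have h := rel_eq (rels := relsG) (u := sG i * sG j) (v := sG j * sG i)
    (Or.inr (Or.inr (Or.inr (Or.inl ⟨i, j, hij, h1, h2, rfl⟩))))
  simp only [map_mul] at h
  exact h

lemma tcommG (i : Fin 2) {j : Fin 7} (hj : 3 ≤ j.val) :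
    PresentedGroup.of (Sum.inl i) * SS j = SS j * PresentedGroup.of (Sum.inl i) := by
  have h := rel_eq (rels := relsG) (u := tG i * sG j) (v := sG j * tG i)
    (Or.inr (Or.inr (Or.inr (Or.inr ⟨i, j, hj, rfl⟩))))
  simp only [map_mul] at h
  exact h

/-! ### Relations holding in `G'` -/

lemma braidG' (i : ℤ) {j : Fin 7} (hj : j.val < 3) :
    TT' i * SS' j * TT' i = SS' j * TT' i * SS' j := by
  have h := rel_eq (rels := relsG') (u := tG' i * sG' j * tG' i)
    (v := sG' j * tG' i * sG' j) (Or.inl ⟨i, j, hj, rfl⟩)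
  simp only [map_mul] at h
  exact h

lemma prodG' (i j : ℤ) : TT' i * TT' (i - 1) = TT' j * TT' (j - 1) := by
  have h := rel_eq (rels := relsG') (u := tG' i * tG' (i - 1)) (v := tG' j * tG' (j - 1))
    (Or.inr (Or.inl ⟨i, j, rfl⟩))
  simp only [map_mul] at h
  exact h

lemma sbraidG' {p : Fin 7 × Fin 7} (hp : p ∈ braidPairs) :
    SS' p.1 * SS' p.2 * SS' p.1 = SS' p.2 * SS' p.1 * SS' p.2 := by
  have h := rel_eq (rels := relsG') (u := sG' p.1 * sG' p.2 * sG' p.1)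
    (v := sG' p.2 * sG' p.1 * sG' p.2) (Or.inr (Or.inr (Or.inl ⟨p, hp, rfl⟩)))
  simp only [map_mul] at h
  exact h

lemma scommG' {i j : Fin 7} (hij : i ≠ j) (h1 : (i, j) ∉ braidPairs)
    (h2 : (j, i) ∉ braidPairs) : SS' i * SS' j = SS' j * SS' i := by
  have h := rel_eq (rels := relsG') (u := sG' i * sG' j) (v := sG' j * sG' i)
    (Or.inr (Or.inr (Or.inr (Or.inl ⟨i, j, hij, h1, h2, rfl⟩))))
  simp only [map_mul] at h
  exact h

lemma tcommG' (i : ℤ) {j : Fin 7} (hj : 3 ≤ j.val) :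
    TT' i * SS' j = SS' j * TT' i := by
  have h := rel_eq (rels := relsG') (u := tG' i * sG' j) (v := sG' j * tG' i)
    (Or.inr (Or.inr (Or.inr (Or.inr ⟨i, j, hj, rfl⟩))))
  simp only [map_mul] at h
  exact h

lemma t2_prodG' : TT' 2 * TT' 1 = TT' 1 * TT' 0 := by
  have h := prodG' 2 1
  rwa [show (2 : ℤ) - 1 = 1 by norm_num, show (1 : ℤ) - 1 = 0 by norm_num] at h

/-- The elliptic relation holds in `G'`. -/
lemma ellG' {j : Fin 7} (hj : j.val < 3) :
    SS' j * (TT' 1 * TT' 0) * SS' j * (TT' 1 * TT' 0) =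
      (TT' 1 * TT' 0) * SS' j * (TT' 1 * TT' 0) * SS' j :=
  elliptic_of (braidG' 1 hj) (braidG' 0 hj) (braidG' 2 hj) t2_prodG'

/-! ### The two homomorphisms -/

def phiF : GenG → PresentedGroup relsG' :=
  Sum.elim (fun i => TT' (i : ℤ)) (fun j => SS' j)

def psiF : GenG' → PresentedGroup relsG :=
  Sum.elim (fun i => Tm XX YY i) (fun j => SS j)

lemma hphi : ∀ r ∈ relsG, FreeGroup.lift phiF r = 1 := by
  rintro r (⟨i, j, hj, rfl⟩ | ⟨p, hp, rfl⟩ | ⟨j, hj, rfl⟩ | ⟨i, j, hij, h1, h2, rfl⟩ |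
    ⟨i, j, hj, rfl⟩)
  · simp only [br, tG, sG, map_mul, map_inv, FreeGroup.lift_apply_of, phiF, Sum.elim_inl, Sum.elim_inr]
    exact one_of_eq (braidG' _ hj)
  · simp only [br, sG, map_mul, map_inv, FreeGroup.lift_apply_of, phiF, Sum.elim_inr]
    exact one_of_eq (sbraidG' hp)
  · simp only [tG, sG, map_mul, map_inv, FreeGroup.lift_apply_of, phiF, Sum.elim_inl, Sum.elim_inr]
    refine one_of_eq ?_
    have h := ellG' hj
    simp only [mul_assoc] at h ⊢
    simpa using h
  · simp only [cm, sG, map_mul, map_inv, FreeGroup.lift_apply_of, phiF, Sum.elim_inr]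
    exact one_of_eq (scommG' hij h1 h2)
  · simp only [cm, tG, sG, map_mul, map_inv, FreeGroup.lift_apply_of, phiF, Sum.elim_inl, Sum.elim_inr]
    exact one_of_eq (tcommG' _ hj)

lemma hpsi : ∀ r ∈ relsG', FreeGroup.lift psiF r = 1 := by
  rintro r (⟨i, j, hj, rfl⟩ | ⟨i, j, rfl⟩ | ⟨p, hp, rfl⟩ | ⟨i, j, hij, h1, h2, rfl⟩ |
    ⟨i, j, hj, rfl⟩)
  · simp only [br, tG', sG', map_mul, map_inv, FreeGroup.lift_apply_of, psiF, Sum.elim_inl,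
      Sum.elim_inr]
    refine one_of_eq ?_
    refine Tm_braid (braidG 0 hj) (braidG 1 hj) ?_ i
    have h := ellG hj
    simp only [mul_assoc] at h ⊢
    exact h
  · simp only [tG', map_mul, map_inv, FreeGroup.lift_apply_of, psiF, Sum.elim_inl]
    refine one_of_eq ?_
    rw [Tm_mul' XX YY i, Tm_mul' XX YY j]
  · simp only [br, sG', map_mul, map_inv, FreeGroup.lift_apply_of, psiF, Sum.elim_inr]
    exact one_of_eq (sbraidG hp)
  · simp only [cm, sG', map_mul, map_inv, FreeGroup.lift_apply_of, psiF, Sum.elim_inr]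
    exact one_of_eq (scommG hij h1 h2)
  · simp only [cm, tG', sG', map_mul, map_inv, FreeGroup.lift_apply_of, psiF, Sum.elim_inl,
      Sum.elim_inr]
    refine one_of_eq ?_
    exact (Tm_commute (tcommG 0 hj) (tcommG 1 hj) i).eq

def Phi : PresentedGroup relsG →* PresentedGroup relsG' := PresentedGroup.toGroup hphi
def Psi : PresentedGroup relsG' →* PresentedGroup relsG := PresentedGroup.toGroup hpsi

lemma TT'_eq_Tm : ∀ i : ℤ, TT' i = Tm (TT' 0) (TT' 1) i := by
  intro i
  induction i using Int.induction_on with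
  | zero => rw [Tm_zero]
  | succ k ih =>
    have hp := prodG' ((k : ℤ) + 1) 1
    rw [show ((k : ℤ) + 1) - 1 = (k : ℤ) by ring, show (1 : ℤ) - 1 = 0 by norm_num] at hp
    have h2 : TT' ((k : ℤ) + 1) = (TT' 1 * TT' 0) * (TT' (k : ℤ))⁻¹ :=
      eq_mul_inv_of_mul_eq hp
    rw [h2, ih, ← Tm_succ]
  | pred k ih =>
    have hp := prodG' (-(k : ℤ)) 1
    rw [show (1 : ℤ) - 1 = 0 by norm_num] at hp
    have h2 : TT' (-(k : ℤ) - 1) = (TT' (-(k : ℤ)))⁻¹ * (TT' 1 * TT' 0) :=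
      eq_inv_mul_of_mul_eq hp
    rw [h2, ih, ← Tm_pred]

lemma Phi_X : Phi XX = TT' 0 := by
  simp only [Phi, XX, PresentedGroup.toGroup.of, phiF, Sum.elim_inl]
  norm_num

lemma Phi_Y : Phi YY = TT' 1 := by
  simp only [Phi, YY, PresentedGroup.toGroup.of, phiF, Sum.elim_inl]
  norm_num

lemma comp1 : Psi.comp Phi = MonoidHom.id (PresentedGroup relsG) := by
  apply PresentedGroup.ext
  rintro (i | j)
  · simp only [MonoidHom.comp_apply, MonoidHom.id_apply, Phi, Psi,
      PresentedGroup.toGroup.of, phiF, Sum.elim_inl, psiF]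
    fin_cases i
    · rw [show ((⟨0, by norm_num⟩ : Fin 2) : ℤ) = 0 by norm_num]
      exact Tm_zero XX YY
    · rw [show ((⟨1, by norm_num⟩ : Fin 2) : ℤ) = 1 by norm_num]
      exact Tm_one XX YY
  · simp only [MonoidHom.comp_apply, MonoidHom.id_apply, Phi, Psi,
      PresentedGroup.toGroup.of, phiF, Sum.elim_inr, psiF]
    rfl

lemma comp2 : Phi.comp Psi = MonoidHom.id (PresentedGroup relsG') := by
  apply PresentedGroup.ext
  rintro (i | j)
  · simp only [MonoidHom.comp_apply, MonoidHom.id_apply, Psi,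
      PresentedGroup.toGroup.of, psiF, Sum.elim_inl]
    rw [map_Tm Phi, Phi_X, Phi_Y, ← TT'_eq_Tm]
    rfl
  · simp only [MonoidHom.comp_apply, MonoidHom.id_apply, Phi, Psi,
      PresentedGroup.toGroup.of, psiF, Sum.elim_inr, phiF]
    rfl

end Construction

theorem G_iso_G' : Nonempty (PresentedGroup relsG ≃* PresentedGroup relsG') :=
  ⟨MonoidHom.toMulEquiv Phi Psi comp1 comp2⟩


end EllipticE7
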